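/- Let k be a field, R = k[x_1,...,x_r], and suppose h = (1, h_1, ..., h_s) is the Hilbert function of an artinian graded algebra A = R/I having the Weak Lefschetz Property. Then h is unimodal: there exists an index t such that h_0 ≤ h_1 ≤ ... ≤ h_t ≥ h_{t+1} ≥ ... ≥ h_s. -/

import Mathlib

set_option maxHeartbeats 1000000
set_option synthInstance.maxHeartbeats 400000

open MvPolynomial

/-- The dimension of the degree-`i` component of the graded algebra `R/I`, where
`R = k[x_1,...,x_r]` is standard graded: it is the image of the space of homogeneous
polynomials of degree `i` in the quotient. -/
noncomputable def hilb {k : Type*} [Field k] {σ : Type*} (I : Ideal (MvPolynomial σ k))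
    (i : ℕ) : ℕ :=
  Module.finrank k ((homogeneousSubmodule σ k i).map (Ideal.Quotient.mkₐ k I).toLinearMap)

/-- Injectivity of the multiplication map `×f : [R/I]_i → [R/I]_{i + deg f}`. -/
def mulInj {k : Type*} [Field k] {σ : Type*} (I : Ideal (MvPolynomial σ k))
    (f : MvPolynomial σ k) (i : ℕ) : Prop :=
  ∀ g ∈ homogeneousSubmodule σ k i, f * g ∈ I → g ∈ I

/-- Surjectivity of the multiplication map `×f : [R/I]_i → [R/I]_j` (with `j = i + deg f`). -/
def mulSurj {k : Type*} [Field k] {σ : Type*} (I : Ideal (MvPolynomial σ k))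
    (f : MvPolynomial σ k) (i j : ℕ) : Prop :=
  ∀ g ∈ homogeneousSubmodule σ k j, ∃ h ∈ homogeneousSubmodule σ k i, g - f * h ∈ I

section Aux

variable {k : Type*} [Field k] {r : ℕ}

lemma finsupp_degree_sub_single {d : Fin r →₀ ℕ} {j : Fin r} (hj : j ∈ d.support) {n : ℕ}
    (hd : d.degree = n + 1) : (d - Finsupp.single j 1).degree = n := by
  have hle : Finsupp.single j 1 ≤ d :=
    Finsupp.single_le_iff.mpr (Nat.one_le_iff_ne_zero.mpr (Finsupp.mem_support_iff.mp hj))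
  have hadd : (d - Finsupp.single j 1) + Finsupp.single j 1 = d := tsub_add_cancel_of_le hle
  have hdeg : ((d - Finsupp.single j 1) + Finsupp.single j 1).degree
      = (d - Finsupp.single j 1).degree + (Finsupp.single j 1).degree := by
    simp_rw [Finsupp.degree_eq_weight_one]; exact map_add _ _ _
  have hsingle : (Finsupp.single j 1 : Fin r →₀ ℕ).degree = 1 := by
    exact Finsupp.degree_single j 1
  rw [hadd, hd, hsingle] at hdeg
  omega

/-- Every homogeneous polynomial of positive degree `n+1` can be written as
`∑ j, X j * G j` with each `G j` homogeneous of degree `n`. -/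
lemma homog_decompose {n : ℕ} (g : MvPolynomial (Fin r) k)
    (hg : g ∈ homogeneousSubmodule (Fin r) k (n + 1)) :
    ∃ G : Fin r → MvPolynomial (Fin r) k,
      (∀ j, G j ∈ homogeneousSubmodule (Fin r) k n) ∧ (∑ j, X j * G j) = g := by
  rw [mem_homogeneousSubmodule] at hg
  have hgdeg : ∀ d : Fin r →₀ ℕ, MvPolynomial.coeff d g ≠ 0 → d.degree = n + 1 := by
    intro d hd
    rw [Finsupp.degree_eq_weight_one]
    exact hg hd
  by_cases hg0 : g = 0
  · exact ⟨fun _ => 0, fun _ => Submodule.zero_mem _, by simp [hg0]⟩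
  -- every exponent appearing in g is nonzero, so Fin r is nonempty
  have hne : ∀ d ∈ g.support, d.support.Nonempty := by
    intro d hd
    have hdeg : d.degree = n + 1 := hgdeg d (MvPolynomial.mem_support_iff.mp hd)
    rcases Finset.eq_empty_or_nonempty d.support with h | h
    · exfalso
      have : d = 0 := by
        ext j; by_contra hj
        exact absurd (Finsupp.mem_support_iff.mpr hj) (by simp [h])
      rw [this] at hdeg; simp at hdeg
    · exact h
  have hFin : Nonempty (Fin r) := by
    obtain ⟨d, hd⟩ := (MvPolynomial.support_nonempty.mpr hg0)
    exact ⟨(hne d hd).choose⟩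
  haveI := hFin
  -- choose a variable for each exponent
  set v : (Fin r →₀ ℕ) → Fin r := fun d =>
    if h : d.support.Nonempty then d.support.min' h else Classical.arbitrary _ with hv
  have hvmem : ∀ d ∈ g.support, v d ∈ d.support := by
    intro d hd
    simp only [hv, dif_pos (hne d hd)]
    exact Finset.min'_mem _ _
  refine ⟨fun j => ∑ d ∈ g.support.filter (fun d => v d = j),
      monomial (d - Finsupp.single j 1) (MvPolynomial.coeff d g), ?_, ?_⟩
  · intro j
    apply Submodule.sum_mem
    intro d hd
    rw [Finset.mem_filter] at hd
    rw [mem_homogeneousSubmodule]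
    apply isHomogeneous_monomial
    have := finsupp_degree_sub_single (hvmem d hd.1) (hgdeg d (MvPolynomial.mem_support_iff.mp hd.1))
    rwa [hd.2] at this
  · have key : ∀ j : Fin r, ∀ d ∈ g.support.filter (fun d => v d = j),
        X j * monomial (d - Finsupp.single j 1) (MvPolynomial.coeff d g)
          = monomial d (MvPolynomial.coeff d g) := by
      intro j d hd
      rw [Finset.mem_filter] at hd
      have hjmem : j ∈ d.support := hd.2 ▸ hvmem d hd.1
      have hle : Finsupp.single j 1 ≤ d :=
        Finsupp.single_le_iff.mpr (Nat.one_le_iff_ne_zero.mpr (Finsupp.mem_support_iff.mp hjmem))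
      have hidx : Finsupp.single j 1 + (d - Finsupp.single j 1) = d := by
        rw [add_comm]; exact tsub_add_cancel_of_le hle
      rw [show (X j : MvPolynomial (Fin r) k) = monomial (Finsupp.single j 1) 1 from rfl,
        MvPolynomial.monomial_mul, one_mul, hidx]
    calc (∑ j, X j * ∑ d ∈ g.support.filter (fun d => v d = j),
            monomial (d - Finsupp.single j 1) (MvPolynomial.coeff d g))
        = ∑ j, ∑ d ∈ g.support.filter (fun d => v d = j),
            X j * monomial (d - Finsupp.single j 1) (MvPolynomial.coeff d g) := by
          simp_rw [Finset.mul_sum]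
      _ = ∑ j, ∑ d ∈ g.support.filter (fun d => v d = j),
            monomial d (MvPolynomial.coeff d g) := by
          exact Finset.sum_congr rfl fun j _ => Finset.sum_congr rfl (key j)
      _ = ∑ d ∈ g.support, monomial d (MvPolynomial.coeff d g) := by
          exact Finset.sum_fiberwise_of_maps_to (fun d _ => Finset.mem_univ (v d)) _
      _ = g := MvPolynomial.support_sum_monomial_coeff g

/-- Surjectivity of multiplication by a linear form propagates to the next degree. -/
lemma mulSurj_succ {I : Ideal (MvPolynomial (Fin r) k)} {ℓ : MvPolynomial (Fin r) k}
    (hℓ : ℓ ∈ homogeneousSubmodule (Fin r) k 1) {i : ℕ}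
    (hs : mulSurj I ℓ i (i + 1)) : mulSurj I ℓ (i + 1) (i + 2) := by
  intro g hg
  obtain ⟨G, hG, hsum⟩ := homog_decompose g hg
  choose H hH hHI using fun j => hs (G j) (hG j)
  refine ⟨∑ j, X j * H j, ?_, ?_⟩
  · apply Submodule.sum_mem
    intro j _
    have hX : (X j : MvPolynomial (Fin r) k) ∈ homogeneousSubmodule (Fin r) k 1 := by
      rw [mem_homogeneousSubmodule]
      exact isHomogeneous_X _ _
    have := homogeneousSubmodule_mul 1 i (Submodule.mul_mem_mul hX (hH j))
    rwa [add_comm] at this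
  · have : g - ℓ * ∑ j, X j * H j = ∑ j, X j * (G j - ℓ * H j) := by
      rw [← hsum, Finset.mul_sum, ← Finset.sum_sub_distrib]
      apply Finset.sum_congr rfl
      intro j _
      ring
    rw [this]
    exact Ideal.sum_mem _ fun j _ => Ideal.mul_mem_left _ _ (hHI j)

variable {I : Ideal (MvPolynomial (Fin r) k)} {ℓ : MvPolynomial (Fin r) k}

/-- Injectivity of multiplication gives an inequality of Hilbert function values. -/
lemma hilb_le_of_mulInj (hart : Module.Finite k (MvPolynomial (Fin r) k ⧸ I))
    (hℓ : ℓ ∈ homogeneousSubmodule (Fin r) k 1) {i : ℕ} (hinj : mulInj I ℓ i) :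
    hilb I i ≤ hilb I (i + 1) := by
  haveI : FiniteDimensional k (MvPolynomial (Fin r) k ⧸ I) := hart
  let mk := Ideal.Quotient.mkₐ k I
  let φ : (MvPolynomial (Fin r) k ⧸ I) →ₗ[k] (MvPolynomial (Fin r) k ⧸ I) :=
    LinearMap.mulLeft k (mk ℓ)
  have hφ : ∀ x, φ x = mk ℓ * x := fun x => rfl
  have hmaps : ∀ x ∈ (homogeneousSubmodule (Fin r) k i).map mk.toLinearMap,
      φ x ∈ (homogeneousSubmodule (Fin r) k (i + 1)).map mk.toLinearMap := by
    rintro x ⟨g, hg, rfl⟩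
    refine ⟨ℓ * g, ?_, ?_⟩
    · have := homogeneousSubmodule_mul 1 i (Submodule.mul_mem_mul hℓ hg)
      rwa [add_comm] at this
    · show mk (ℓ * g) = φ (mk g)
      rw [hφ, map_mul]
  let ψ := φ.restrict hmaps
  haveI : FiniteDimensional k
      ((homogeneousSubmodule (Fin r) k (i + 1)).map mk.toLinearMap) :=
    FiniteDimensional.finiteDimensional_submodule _
  have hinj' : Function.Injective ψ := by
    rw [← LinearMap.ker_eq_bot, Submodule.eq_bot_iff]
    rintro ⟨x, hx⟩ hker
    obtain ⟨g, hg, rfl⟩ := hx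
    have hφ0 : φ (mk.toLinearMap g) = 0 := congrArg Subtype.val hker
    have h0 : mk (ℓ * g) = 0 := by rw [map_mul, ← hφ (mk g)]; exact hφ0
    have hmem : ℓ * g ∈ I := by
      rwa [Ideal.Quotient.mkₐ_eq_mk, Ideal.Quotient.eq_zero_iff_mem] at h0
    have hgI : g ∈ I := hinj g hg hmem
    have : mk g = 0 := by
      rw [Ideal.Quotient.mkₐ_eq_mk, Ideal.Quotient.eq_zero_iff_mem]; exact hgI
    exact Subtype.ext this
  exact LinearMap.finrank_le_finrank_of_injective hinj'

/-- Surjectivity of multiplication gives an inequality of Hilbert function values. -/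
lemma hilb_ge_of_mulSurj (hart : Module.Finite k (MvPolynomial (Fin r) k ⧸ I))
    (hℓ : ℓ ∈ homogeneousSubmodule (Fin r) k 1) {i : ℕ} (hsurj : mulSurj I ℓ i (i + 1)) :
    hilb I (i + 1) ≤ hilb I i := by
  haveI : FiniteDimensional k (MvPolynomial (Fin r) k ⧸ I) := hart
  let mk := Ideal.Quotient.mkₐ k I
  let φ : (MvPolynomial (Fin r) k ⧸ I) →ₗ[k] (MvPolynomial (Fin r) k ⧸ I) :=
    LinearMap.mulLeft k (mk ℓ)
  have hφ : ∀ x, φ x = mk ℓ * x := fun x => rfl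
  have hmaps : ∀ x ∈ (homogeneousSubmodule (Fin r) k i).map mk.toLinearMap,
      φ x ∈ (homogeneousSubmodule (Fin r) k (i + 1)).map mk.toLinearMap := by
    rintro x ⟨g, hg, rfl⟩
    refine ⟨ℓ * g, ?_, ?_⟩
    · have := homogeneousSubmodule_mul 1 i (Submodule.mul_mem_mul hℓ hg)
      rwa [add_comm] at this
    · show mk (ℓ * g) = φ (mk g)
      rw [hφ, map_mul]
  let ψ := φ.restrict hmaps
  haveI : FiniteDimensional k
      ((homogeneousSubmodule (Fin r) k i).map mk.toLinearMap) :=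
    FiniteDimensional.finiteDimensional_submodule _
  have hsurj' : Function.Surjective ψ := by
    rintro ⟨y, hy⟩
    obtain ⟨g, hg, rfl⟩ := hy
    obtain ⟨h, hh, hdiff⟩ := hsurj g hg
    refine ⟨⟨mk.toLinearMap h, ⟨h, hh, rfl⟩⟩, Subtype.ext ?_⟩
    show φ (mk.toLinearMap h) = mk.toLinearMap g
    have h0 : mk (g - ℓ * h) = 0 := by
      rwa [Ideal.Quotient.mkₐ_eq_mk, Ideal.Quotient.eq_zero_iff_mem]
    have hgh : mk g = mk (ℓ * h) := sub_eq_zero.mp (by rwa [map_sub] at h0)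
    rw [hφ]
    show mk ℓ * mk h = mk g
    rw [hgh, map_mul]
  calc hilb I (i + 1)
      = Module.finrank k (⊤ : Submodule k
          (((homogeneousSubmodule (Fin r) k (i + 1)).map mk.toLinearMap))) :=
        (finrank_top k _).symm
    _ = Module.finrank k (LinearMap.range ψ) := by
        rw [LinearMap.range_eq_top.mpr hsurj']
    _ ≤ hilb I i := LinearMap.finrank_range_le ψ

end Aux

/-- the Hilbert function of an artinian graded algebra with the WLP is
unimodal. -/
theorem stmt13 (k : Type*) [Field k] (r : ℕ) (I : Ideal (MvPolynomial (Fin r) k))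
    (hhom : ∀ f ∈ I, ∀ n : ℕ, homogeneousComponent n f ∈ I)
    (hart : Module.Finite k (MvPolynomial (Fin r) k ⧸ I))
    (hwlp : ∃ ℓ ∈ homogeneousSubmodule (Fin r) k 1, ∀ i : ℕ,
      mulInj I ℓ i ∨ mulSurj I ℓ i (i + 1)) :
    ∃ t : ℕ, (∀ i j : ℕ, i ≤ j → j ≤ t → hilb I i ≤ hilb I j) ∧
      (∀ i j : ℕ, t ≤ i → i ≤ j → hilb I j ≤ hilb I i) := by
  classical
  obtain ⟨ℓ, hℓ, hwlp'⟩ := hwlp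
  haveI : FiniteDimensional k (MvPolynomial (Fin r) k ⧸ I) := hart
  by_cases hS : ∃ i, mulSurj I ℓ i (i + 1)
  · -- t = least degree from which multiplication is surjective
    set t := Nat.find hS with htdef
    have hinj : ∀ i < t, mulInj I ℓ i := by
      intro i hi
      rcases hwlp' i with h | h
      · exact h
      · exact absurd h (Nat.find_min hS hi)
    have hsurj : ∀ i, t ≤ i → mulSurj I ℓ i (i + 1) := by
      intro i hi
      induction i with
      | zero =>
        have : t = 0 := Nat.le_zero.mp hi
        exact this ▸ Nat.find_spec hS
      | succ n ih =>
        rcases Nat.lt_or_ge t (n + 1) with h | h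
        · exact mulSurj_succ hℓ (ih (Nat.lt_succ_iff.mp h))
        · have : t = n + 1 := le_antisymm hi h
          exact this ▸ Nat.find_spec hS
    refine ⟨t, ?_, ?_⟩
    · intro i j hij hjt
      induction j with
      | zero => simp_all
      | succ n ih =>
        rcases Nat.lt_or_ge i (n + 1) with h | h
        · have hstep : hilb I n ≤ hilb I (n + 1) :=
            hilb_le_of_mulInj hart hℓ (hinj n (Nat.lt_of_succ_le hjt))
          exact le_trans (ih (Nat.lt_succ_iff.mp h) (le_trans (Nat.le_succ n) hjt)) hstep
        · have : i = n + 1 := le_antisymm hij h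
          exact this ▸ le_refl _
    · intro i j hti hij
      induction j with
      | zero => simp_all
      | succ n ih =>
        rcases Nat.lt_or_ge i (n + 1) with h | h
        · have hstep : hilb I (n + 1) ≤ hilb I n :=
            hilb_ge_of_mulSurj hart hℓ (hsurj n (le_trans hti (Nat.lt_succ_iff.mp h)))
          exact le_trans hstep (ih (Nat.lt_succ_iff.mp h))
        · have : i = n + 1 := le_antisymm hij h
          exact this ▸ le_refl _
  · -- multiplication is injective in every degree: hilb is monotone and bounded
    push_neg at hS
    have hinj : ∀ i, mulInj I ℓ i := fun i => (hwlp' i).resolve_right (hS i)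
    have hmono : ∀ i j, i ≤ j → hilb I i ≤ hilb I j := by
      intro i j hij
      induction j with
      | zero => simp_all
      | succ n ih =>
        rcases Nat.lt_or_ge i (n + 1) with h | h
        · exact le_trans (ih (Nat.lt_succ_iff.mp h))
            (hilb_le_of_mulInj hart hℓ (hinj n))
        · have : i = n + 1 := le_antisymm hij h
          exact this ▸ le_refl _
    -- bounded by the finrank of the whole quotient
    have hbdd : BddAbove (Set.range (hilb I)) := by
      refine ⟨Module.finrank k (MvPolynomial (Fin r) k ⧸ I), ?_⟩
      rintro _ ⟨i, rfl⟩
      exact Submodule.finrank_le _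
    have hmem : sSup (Set.range (hilb I)) ∈ Set.range (hilb I) :=
      Nat.sSup_mem ⟨hilb I 0, 0, rfl⟩ hbdd
    obtain ⟨t, ht⟩ := hmem
    refine ⟨t, fun i j hij _ => hmono i j hij, ?_⟩
    intro i j hti hij
    calc hilb I j ≤ sSup (Set.range (hilb I)) := le_csSup hbdd ⟨j, rfl⟩
      _ = hilb I t := ht.symm
      _ ≤ hilb I i := hmono t i hti
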